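/- arXiv:2402.19342 — 3 statements merged into one kernel-verified Lean document; each statement's English description precedes it below -/
import Mathlib

section
/- Let F, G: C × D → W be braiding-preserved E-bilinear bifunctors between braided E-modules, with E-bilinear structures (s^{F1}, s^{F2}), (s^{G1}, s^{G2}) and balanced structures b^F, b^G. Let α: F ⇒ G be a natural transformation which is a balanced E-module natural transformation (α_{c, e⊙d} ∘ b^F_{c,e,d} = b^G_{c,e,d} ∘ α_{c⊙e, d}) and which, for each object d of D, is a left E-module natural transformation (F(−,d), s^{F1}) ⇒ (G(−,d), s^{G1}). Then for each object c of C, α is a left E-module natural transformation (F(c,−), s^{F2}) ⇒ (G(c,−), s^{G2}); that is, s^{G2}_{e,d} ∘ α_{c, e⊙d} = (1_e ⊙ α_{c,d}) ∘ s^{F2}_{e,d} for all e in E, d in D. -/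
/-!
Statement 0.

Let `E` be a symmetric fusion category (over an algebraically closed field `k` of
characteristic zero) with braiding `r = β_`, and let `(C, τ)` be a braided `E`-module,
i.e. a (finite semisimple) left `E`-module category equipped with an `E`-module braiding
`τ = τ² ∘ τ¹` (where the right `E`-action on `C` is induced from the left action,
`x ⊙ e := e ⊙ x`, and all structural identifications are made explicit via the
action associator `μ`, the induced right-associator `rAssoc` and the middle-exchange
isomorphism `ex`).

Then for all `e e' : E` and `x : C`:
* `τ¹_{e, x ⊙ e'} = (1_x ⊙ r_{e,e'}) ∘ (τ¹_{e,x} ⊙ 1_{e'})` as morphisms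
  `e ⊙ x ⊙ e' ⟶ x ⊙ e' ⊙ e`, and
* `τ²_{x ⊙ e', e} = (τ²_{x,e} ⊙ 1_{e'}) ∘ (1_x ⊙ r_{e',e})` as morphisms
  `x ⊙ e' ⊙ e ⟶ e ⊙ x ⊙ e'`.
-/

open CategoryTheory MonoidalCategory Category

universe v u v' u'

/-- A left module category over a monoidal category `E`: an action bifunctor together with
coherent associativity and unit isomorphisms.  (In the paper the module categories are
moreover finite semisimple `k`-linear; this plays no role in the statement below.) -/
structure LeftModuleCatStruct (E : Type u) [Category.{v} E] [MonoidalCategory E]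
    (C : Type u') [Category.{v'} C] where
  /-- the action bifunctor `(e, x) ↦ e ⊙ x` -/
  act : E ⥤ C ⥤ C
  /-- the associator `(e ⊗ e') ⊙ x ≅ e ⊙ (e' ⊙ x)` -/
  assocIso : ∀ e e' : E, act.obj (e ⊗ e') ≅ act.obj e' ⋙ act.obj e
  /-- the unitor `𝟙_E ⊙ x ≅ x` -/
  unitIso : act.obj (𝟙_ E) ≅ 𝟭 C
  assoc_natural :
    ∀ {e₁ e₂ e₁' e₂' : E} (f : e₁ ⟶ e₁') (g : e₂ ⟶ e₂') (x : C),
      (act.map (f ⊗ₘ g)).app x ≫ (assocIso e₁' e₂').hom.app x =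
        (assocIso e₁ e₂).hom.app x ≫ (act.obj e₁).map ((act.map g).app x) ≫
          (act.map f).app ((act.obj e₂').obj x)
  pentagon :
    ∀ (e₁ e₂ e₃ : E) (x : C),
      (assocIso (e₁ ⊗ e₂) e₃).hom.app x ≫ (assocIso e₁ e₂).hom.app ((act.obj e₃).obj x) =
        (act.map (α_ e₁ e₂ e₃).hom).app x ≫ (assocIso e₁ (e₂ ⊗ e₃)).hom.app x ≫
          (act.obj e₁).map ((assocIso e₂ e₃).hom.app x)
  unit_act :
    ∀ (e : E) (x : C),
      (assocIso (𝟙_ E) e).hom.app x ≫ unitIso.hom.app ((act.obj e).obj x) =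
        (act.map (λ_ e).hom).app x
  act_unit :
    ∀ (e : E) (x : C),
      (assocIso e (𝟙_ E)).hom.app x ≫ (act.obj e).map (unitIso.hom.app x) =
        (act.map (ρ_ e).hom).app x

namespace LeftModuleCatStruct

variable {E : Type u} [Category.{v} E] [MonoidalCategory E] [BraidedCategory E]
variable {C : Type u'} [Category.{v'} C]
variable (M : LeftModuleCatStruct E C)

/-- `e ⊙ x`.  The induced right action is `x ⊙ e := e ⊙ x`. -/
def smul (e : E) (x : C) : C := (M.act.obj e).obj x

/-- The associator `μ_{e,e',x} : (e ⊗ e') ⊙ x ≅ e ⊙ (e' ⊙ x)`. -/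
def μ (e e' : E) (x : C) : M.smul (e ⊗ e') x ≅ M.smul e (M.smul e' x) :=
  (M.assocIso e e').app x

/-- The associator of the induced right action,
`x ⊙ (e ⊗ e') = (e ⊗ e') ⊙ x ≅ e' ⊙ (e ⊙ x) = (x ⊙ e) ⊙ e'`, built from the braiding of `E`. -/
def rAssoc (e e' : E) (x : C) : M.smul (e ⊗ e') x ≅ M.smul e' (M.smul e x) :=
  (M.act.mapIso (β_ e e')).app x ≪≫ (M.assocIso e' e).app x

/-- The middle-exchange isomorphism
`(e ⊙ x) ⊙ e' = e' ⊙ (e ⊙ x) ≅ e ⊙ (e' ⊙ x) = e ⊙ (x ⊙ e')` (read backwards),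
i.e. the canonical identification `e ⊙ (e' ⊙ x) ≅ e' ⊙ (e ⊙ x)` coming from the braiding. -/
def ex (e e' : E) (x : C) : M.smul e (M.smul e' x) ≅ M.smul e' (M.smul e x) :=
  ((M.assocIso e e').app x).symm ≪≫ (M.act.mapIso (β_ e e')).app x ≪≫ (M.assocIso e' e).app x

/-- An `E`-module braiding on a left `E`-module category `C` (Definition 2.2 of the paper):
natural isomorphisms `τ¹_{e,x} : e ⊙ x ⟶ x ⊙ e` and `τ²_{x,e} : x ⊙ e ⟶ e ⊙ x`
(the right action being induced from the left one, both are recorded as automorphisms of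
`e ⊙ x`), with `τ_{𝟙,x} = id` and satisfying the four compatibility diagrams
(2.1) and (2.2) of the paper, written with all structural isomorphisms explicit. -/
structure ModuleBraiding where
  τ₁ : ∀ (e : E) (x : C), M.smul e x ≅ M.smul e x
  τ₂ : ∀ (x : C) (e : E), M.smul e x ≅ M.smul e x
  τ₁_nat_left :
    ∀ {e e' : E} (f : e ⟶ e') (x : C),
      (M.act.map f).app x ≫ (τ₁ e' x).hom = (τ₁ e x).hom ≫ (M.act.map f).app x
  τ₁_nat_right :
    ∀ (e : E) {x y : C} (g : x ⟶ y),
      (M.act.obj e).map g ≫ (τ₁ e y).hom = (τ₁ e x).hom ≫ (M.act.obj e).map g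
  τ₂_nat_left :
    ∀ {e e' : E} (f : e ⟶ e') (x : C),
      (M.act.map f).app x ≫ (τ₂ x e').hom = (τ₂ x e).hom ≫ (M.act.map f).app x
  τ₂_nat_right :
    ∀ (e : E) {x y : C} (g : x ⟶ y),
      (M.act.obj e).map g ≫ (τ₂ y e).hom = (τ₂ x e).hom ≫ (M.act.obj e).map g
  /-- `τ_{𝟙_E, x} = id` -/
  unit_braiding : ∀ x : C, (τ₁ (𝟙_ E) x).hom ≫ (τ₂ x (𝟙_ E)).hom = 𝟙 _
  /-- `τ¹_{e, e' ⊙ x} = (1_{e'} ⊙ τ¹_{e,x}) ∘ (r_{e,e'} ⊙ 1_x)` (first diagram of (2.1)) -/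
  braiding₁_act :
    ∀ (e e' : E) (x : C),
      (τ₁ e (M.smul e' x)).hom ≫ (M.ex e e' x).hom =
        (M.ex e e' x).hom ≫ (M.act.obj e').map (τ₁ e x).hom
  /-- `τ²_{e' ⊙ x, e} = (r_{e',e} ⊙ 1_x) ∘ (1_{e'} ⊙ τ²_{x,e})` (second diagram of (2.1)) -/
  act_braiding₂ :
    ∀ (e e' : E) (x : C),
      (M.ex e e' x).inv ≫ (τ₂ (M.smul e' x) e).hom =
        (M.act.obj e').map (τ₂ x e).hom ≫ (M.ex e' e x).hom
  /-- `τ¹_{e ⊗ e', x} = (τ¹_{e,x} ⊙ 1_{e'}) ∘ (1_e ⊙ τ¹_{e',x})` (first diagram of (2.2)) -/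
  braiding₁_tensor :
    ∀ (e e' : E) (x : C),
      (τ₁ (e ⊗ e') x).hom ≫ (M.rAssoc e e' x).hom =
        (M.μ e e' x).hom ≫ (M.act.obj e).map (τ₁ e' x).hom ≫ (M.ex e e' x).hom ≫
          (M.act.obj e').map (τ₁ e x).hom
  /-- `τ²_{x, e ⊗ e'} = (1_e ⊙ τ²_{x,e'}) ∘ (τ²_{x,e} ⊙ 1_{e'})` (second diagram of (2.2)) -/
  tensor_braiding₂ :
    ∀ (e e' : E) (x : C),
      (M.rAssoc e e' x).inv ≫ (τ₂ x (e ⊗ e')).hom ≫ (M.μ e e' x).hom =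
        (M.act.obj e').map (τ₂ x e).hom ≫ (M.ex e e' x).inv ≫
          (M.act.obj e).map (τ₂ x e').hom

end LeftModuleCatStruct


section Bifunctor

variable {E : Type u} [Category.{v} E] [MonoidalCategory E] [BraidedCategory E]
variable {C : Type*} [Category C] {D : Type*} [Category D] {W : Type*} [Category W]

/-- An `E`-bilinear bifunctor `F : C × D → W` between left `E`-module categories:
a bifunctor which is a left `E`-module functor in each variable separately
(via `s¹` and `s²`), naturally in the other variable. -/
structure EBilinearBifunctor (MC : LeftModuleCatStruct E C)
    (MD : LeftModuleCatStruct E D) (MW : LeftModuleCatStruct E W) where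
  F : C ⥤ D ⥤ W
  /-- `s¹_{e,c} : F(e ⊙ c, d) ≅ e ⊙ F(c, d)` -/
  s₁ : ∀ (e : E) (c : C) (d : D), (F.obj (MC.smul e c)).obj d ≅ MW.smul e ((F.obj c).obj d)
  /-- `s²_{e,d} : F(c, e ⊙ d) ≅ e ⊙ F(c, d)` -/
  s₂ : ∀ (e : E) (c : C) (d : D), (F.obj c).obj (MD.smul e d) ≅ MW.smul e ((F.obj c).obj d)
  s₁_nat_e : ∀ {e e' : E} (f : e ⟶ e') (c : C) (d : D),
    (F.map ((MC.act.map f).app c)).app d ≫ (s₁ e' c d).hom =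
      (s₁ e c d).hom ≫ (MW.act.map f).app ((F.obj c).obj d)
  s₁_nat_c : ∀ (e : E) {c c' : C} (f : c ⟶ c') (d : D),
    (F.map ((MC.act.obj e).map f)).app d ≫ (s₁ e c' d).hom =
      (s₁ e c d).hom ≫ (MW.act.obj e).map ((F.map f).app d)
  s₁_nat_d : ∀ (e : E) (c : C) {d d' : D} (g : d ⟶ d'),
    (F.obj (MC.smul e c)).map g ≫ (s₁ e c d').hom =
      (s₁ e c d).hom ≫ (MW.act.obj e).map ((F.obj c).map g)
  s₂_nat_e : ∀ {e e' : E} (f : e ⟶ e') (c : C) (d : D),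
    (F.obj c).map ((MD.act.map f).app d) ≫ (s₂ e' c d).hom =
      (s₂ e c d).hom ≫ (MW.act.map f).app ((F.obj c).obj d)
  s₂_nat_c : ∀ (e : E) {c c' : C} (f : c ⟶ c') (d : D),
    (F.map f).app (MD.smul e d) ≫ (s₂ e c' d).hom =
      (s₂ e c d).hom ≫ (MW.act.obj e).map ((F.map f).app d)
  s₂_nat_d : ∀ (e : E) (c : C) {d d' : D} (g : d ⟶ d'),
    (F.obj c).map ((MD.act.obj e).map g) ≫ (s₂ e c d').hom =
      (s₂ e c d).hom ≫ (MW.act.obj e).map ((F.obj c).map g)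
  s₁_tensor : ∀ (e e' : E) (c : C) (d : D),
    (F.map (MC.μ e e' c).hom).app d ≫ (s₁ e (MC.smul e' c) d).hom ≫
        (MW.act.obj e).map (s₁ e' c d).hom =
      (s₁ (e ⊗ e') c d).hom ≫ (MW.μ e e' ((F.obj c).obj d)).hom
  s₁_unit : ∀ (c : C) (d : D),
    (s₁ (𝟙_ E) c d).hom ≫ MW.unitIso.hom.app ((F.obj c).obj d) =
      (F.map (MC.unitIso.hom.app c)).app d
  s₂_tensor : ∀ (e e' : E) (c : C) (d : D),
    (F.obj c).map (MD.μ e e' d).hom ≫ (s₂ e c (MD.smul e' d)).hom ≫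
        (MW.act.obj e).map (s₂ e' c d).hom =
      (s₂ (e ⊗ e') c d).hom ≫ (MW.μ e e' ((F.obj c).obj d)).hom
  s₂_unit : ∀ (c : C) (d : D),
    (s₂ (𝟙_ E) c d).hom ≫ MW.unitIso.hom.app ((F.obj c).obj d) =
      (F.obj c).map (MD.unitIso.hom.app d)

namespace EBilinearBifunctor

variable {MC : LeftModuleCatStruct E C} {MD : LeftModuleCatStruct E D}
  {MW : LeftModuleCatStruct E W}

/-- The balanced `E`-module structure
`b_{c,e,d} : F(c ⊙ e, d) → F(e ⊙ c, d) → e ⊙ F(c,d) → F(c, e ⊙ d)`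
(using `τ^{C2}_{c,e}`, `s¹` and `(s²)⁻¹`). -/
def bal (T : EBilinearBifunctor MC MD MW) (BC : MC.ModuleBraiding)
    (c : C) (e : E) (d : D) :
    (T.F.obj (MC.smul e c)).obj d ⟶ (T.F.obj c).obj (MD.smul e d) :=
  (T.F.map (BC.τ₂ c e).hom).app d ≫ (T.s₁ e c d).hom ≫ (T.s₂ e c d).inv

/-- `b̂_{c,e,d} := (s²_{e,d})⁻¹ ∘ s¹_{e,c} : F(e ⊙ c, d) → F(c, e ⊙ d)`. -/
def bhat (T : EBilinearBifunctor MC MD MW) (c : C) (e : E) (d : D) :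
    (T.F.obj (MC.smul e c)).obj d ⟶ (T.F.obj c).obj (MD.smul e d) :=
  (T.s₁ e c d).hom ≫ (T.s₂ e c d).inv

end EBilinearBifunctor

/-- A braiding-preserved `E`-bilinear bifunctor `F : C × D → W` between braided
`E`-modules (Definition 2.7 of the paper): an `E`-bilinear bifunctor which is a
balanced `E`-module functor with respect to the balancing `b`, and such that `s¹` and
`(s²)⁻¹` intertwine the `E`-module braidings `τ^C`, `τ^W`, `τ^D`. -/
structure BraidingPreservedBifunctor (MC : LeftModuleCatStruct E C) (BC : MC.ModuleBraiding)
    (MD : LeftModuleCatStruct E D) (BD : MD.ModuleBraiding)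
    (MW : LeftModuleCatStruct E W) (BW : MW.ModuleBraiding) extends
      EBilinearBifunctor MC MD MW where
  balanced_tensor : ∀ (e e' : E) (c : C) (d : D),
    (F.map (MC.rAssoc e e' c).hom).app d ≫
        toEBilinearBifunctor.bal BC (MC.smul e c) e' d ≫
        toEBilinearBifunctor.bal BC c e (MD.smul e' d) =
      toEBilinearBifunctor.bal BC c (e ⊗ e') d ≫ (F.obj c).map (MD.μ e e' d).hom
  balanced_unit : ∀ (c : C) (d : D),
    toEBilinearBifunctor.bal BC c (𝟙_ E) d =
      (F.map (MC.unitIso.hom.app c)).app d ≫ (F.obj c).map (MD.unitIso.inv.app d)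
  preserve₁ : ∀ (e : E) (c : C) (d : D),
    (F.map ((BC.τ₁ e c).hom ≫ (BC.τ₂ c e).hom)).app d ≫ (s₁ e c d).hom =
      (s₁ e c d).hom ≫ (BW.τ₁ e ((F.obj c).obj d)).hom ≫ (BW.τ₂ ((F.obj c).obj d) e).hom
  preserve₂ : ∀ (e : E) (c : C) (d : D),
    (s₂ e c d).inv ≫ (F.obj c).map ((BD.τ₁ e d).hom ≫ (BD.τ₂ d e).hom) =
      (BW.τ₁ e ((F.obj c).obj d)).hom ≫ (BW.τ₂ ((F.obj c).obj d) e).hom ≫ (s₂ e c d).inv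

end Bifunctor


/-- Proposition 2.8 of the paper.
Let `F, G : C × D → W` be braiding-preserved `E`-bilinear bifunctors between braided
`E`-modules and let `α : F ⇒ G` be a natural transformation which is a balanced
`E`-module natural transformation and, for each `d`, a left `E`-module natural
transformation `(F(−,d), s^{F1}) ⇒ (G(−,d), s^{G1})`.  Then for each `c`, `α` is a left
`E`-module natural transformation `(F(c,−), s^{F2}) ⇒ (G(c,−), s^{G2})`, i.e.
`s^{G2}_{e,d} ∘ α_{c, e ⊙ d} = (1_e ⊙ α_{c,d}) ∘ s^{F2}_{e,d}` for all `e`, `d`. -/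
theorem statement3
    {k : Type*} [Field k] [IsAlgClosed k] [CharZero k]
    {E : Type u} [Category.{v} E] [MonoidalCategory E] [SymmetricCategory E]
    [Preadditive E] [CategoryTheory.Linear k E]
    {C : Type*} [Category C] {D : Type*} [Category D] {W : Type*} [Category W]
    [Preadditive C] [CategoryTheory.Linear k C]
    [Preadditive D] [CategoryTheory.Linear k D]
    [Preadditive W] [CategoryTheory.Linear k W]
    {MC : LeftModuleCatStruct E C} {BC : MC.ModuleBraiding}
    {MD : LeftModuleCatStruct E D} {BD : MD.ModuleBraiding}
    {MW : LeftModuleCatStruct E W} {BW : MW.ModuleBraiding}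
    (Fb Gb : BraidingPreservedBifunctor MC BC MD BD MW BW)
    (α : ∀ (c : C) (d : D), (Fb.F.obj c).obj d ⟶ (Gb.F.obj c).obj d)
    (α_nat_c : ∀ {c c' : C} (f : c ⟶ c') (d : D),
      (Fb.F.map f).app d ≫ α c' d = α c d ≫ (Gb.F.map f).app d)
    (α_nat_d : ∀ (c : C) {d d' : D} (g : d ⟶ d'),
      (Fb.F.obj c).map g ≫ α c d' = α c d ≫ (Gb.F.obj c).map g)
    (α_balanced : ∀ (c : C) (e : E) (d : D),
      Fb.toEBilinearBifunctor.bal BC c e d ≫ α c (MD.smul e d) =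
        α (MC.smul e c) d ≫ Gb.toEBilinearBifunctor.bal BC c e d)
    (α_module₁ : ∀ (e : E) (c : C) (d : D),
      α (MC.smul e c) d ≫ (Gb.s₁ e c d).hom =
        (Fb.s₁ e c d).hom ≫ (MW.act.obj e).map (α c d)) :
    ∀ (e : E) (c : C) (d : D),
      α c (MD.smul e d) ≫ (Gb.s₂ e c d).hom =
        (Fb.s₂ e c d).hom ≫ (MW.act.obj e).map (α c d) := by
  intro e c d
  have h := α_balanced c e d
  simp only [EBilinearBifunctor.bal, Category.assoc] at h
  rw [← reassoc_of% (α_nat_c (BC.τ₂ c e).hom d),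
    reassoc_of% (α_module₁ e c d)] at h
  have h' : (Fb.s₂ e c d).inv ≫ α c (MD.smul e d) =
      (MW.act.obj e).map (α c d) ≫ (Gb.s₂ e c d).inv := by
    have : IsIso ((Fb.F.map (BC.τ₂ c e).hom).app d) := by
      have : IsIso (Fb.F.map (BC.τ₂ c e).hom) :=
        inferInstanceAs (IsIso (Fb.F.mapIso (BC.τ₂ c e)).hom)
      infer_instance
    exact (cancel_epi (Fb.s₁ e c d).hom).mp
      ((cancel_epi ((Fb.F.map (BC.τ₂ c e).hom).app d)).mp (h.trans (by exact congrArg ((Fb.F.map (BC.τ₂ c e).hom).app d ≫ ·) (Category.assoc _ _ _))))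
  refine (Iso.inv_comp_eq _).mp ?_
  rw [reassoc_of% h']
  exact (Category.assoc _ _ _).trans ((congrArg ((MW.act.obj e).map (α c d) ≫ ·)
    (Gb.s₂ e c d).inv_hom_id).trans (Category.comp_id _))
end

section
/- Let F: C × D → W be a braiding-preserved E-bilinear bifunctor between braided E-modules. Then for all objects e₁, e₂ of E, c of C and d of D, the following pentagon commutes: (r_{e₂,e₁} ⊙ 1_{F(c,d)}) ∘ (1_{e₂} ⊙ s^{F1}_{e₁,c}) ∘ s^{F2}_{e₂,d} = (1_{e₁} ⊙ s^{F2}_{e₂,d}) ∘ s^{F1}_{e₁,c} as morphisms F(e₁⊙c, e₂⊙d) → e₁⊙e₂⊙F(c,d), where r is the braiding of E. -/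
/-!
Statement 0.

Let `E` be a symmetric fusion category (over an algebraically closed field `k` of
characteristic zero) with braiding `r = β_`, and let `(C, τ)` be a braided `E`-module,
i.e. a (finite semisimple) left `E`-module category equipped with an `E`-module braiding
`τ = τ² ∘ τ¹` (where the right `E`-action on `C` is induced from the left action,
`x ⊙ e := e ⊙ x`, and all structural identifications are made explicit via the
action associator `μ`, the induced right-associator `rAssoc` and the middle-exchange
isomorphism `ex`).

Then for all `e e' : E` and `x : C`:
* `τ¹_{e, x ⊙ e'} = (1_x ⊙ r_{e,e'}) ∘ (τ¹_{e,x} ⊙ 1_{e'})` as morphisms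
  `e ⊙ x ⊙ e' ⟶ x ⊙ e' ⊙ e`, and
* `τ²_{x ⊙ e', e} = (τ²_{x,e} ⊙ 1_{e'}) ∘ (1_x ⊙ r_{e',e})` as morphisms
  `x ⊙ e' ⊙ e ⟶ e ⊙ x ⊙ e'`.
-/

open CategoryTheory MonoidalCategory Category

universe v u v' u'

set_option linter.unusedSectionVars false

section AuxLemmas

open CategoryTheory MonoidalCategory Category LeftModuleCatStruct

variable {E : Type u} [Category.{v} E] [MonoidalCategory E]
variable {C : Type u'} [Category.{v'} C]

lemma ex_hom_ex_hom [SymmetricCategory E] (M : LeftModuleCatStruct E C) (e e' : E) (x : C) :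
    (M.ex e e' x).hom ≫ (M.ex e' e x).hom = 𝟙 _ := by
  have h1 : (M.act.map (β_ e e').hom).app x ≫ (M.act.map (β_ e' e).hom).app x = 𝟙 _ := by
    rw [← NatTrans.comp_app, ← Functor.map_comp, SymmetricCategory.symmetry]
    simp
  simp only [LeftModuleCatStruct.ex, Iso.trans_hom, Iso.symm_hom, Iso.app_hom, Iso.app_inv,
    Functor.mapIso_hom, Category.assoc]
  dsimp only [LeftModuleCatStruct.smul, LeftModuleCatStruct.ex]
  simp only [Iso.trans_hom, Iso.symm_hom, Iso.app_hom, Iso.app_inv,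
    Functor.mapIso_hom, Category.assoc]
  rw [Iso.hom_inv_id_app_assoc, reassoc_of% h1, Iso.inv_hom_id_app]
  rfl

lemma ex_inv_eq [SymmetricCategory E] (M : LeftModuleCatStruct E C) (e e' : E) (x : C) :
    (M.ex e e' x).inv = (M.ex e' e x).hom :=
  Iso.inv_ext (ex_hom_ex_hom M e e' x)

lemma rassoc {C : Type*} [Category C] {X Y Z W : C} {f : X ⟶ Y} {g : Y ⟶ Z} {k : X ⟶ Z}
    (h : f ≫ g = k) (l : Z ⟶ W) : f ≫ g ≫ l = k ≫ l := by
  rw [← Category.assoc, h]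

end AuxLemmas
section Aux2

open CategoryTheory MonoidalCategory Category LeftModuleCatStruct

variable {E : Type u} [Category.{v} E] [MonoidalCategory E] [BraidedCategory E]
variable {C : Type*} [Category C] {D : Type*} [Category D] {W : Type*} [Category W]
variable {MC : LeftModuleCatStruct E C} {MD : LeftModuleCatStruct E D}
  {MW : LeftModuleCatStruct E W}

lemma s₁_ex (T : EBilinearBifunctor MC MD MW) (e₁ e₂ : E) (c : C) (d : D) :
    (T.F.map (MC.ex e₂ e₁ c).hom).app d ≫ (T.s₁ e₁ (MC.smul e₂ c) d).hom ≫
      (MW.act.obj e₁).map (T.s₁ e₂ c d).hom =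
    (T.s₁ e₂ (MC.smul e₁ c) d).hom ≫ (MW.act.obj e₂).map (T.s₁ e₁ c d).hom ≫
      (MW.ex e₂ e₁ ((T.F.obj c).obj d)).hom := by
  have h12 := T.s₁_tensor e₁ e₂ c d
  have h21 := T.s₁_tensor e₂ e₁ c d
  have hnat := T.s₁_nat_e (β_ e₂ e₁).hom c d
  simp only [LeftModuleCatStruct.ex, LeftModuleCatStruct.μ, LeftModuleCatStruct.smul,
    Iso.trans_hom, Iso.symm_hom, Iso.app_hom, Iso.app_inv, Functor.mapIso_hom,
    Functor.map_comp, NatTrans.comp_app, Category.assoc] at *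
  rw [h12, reassoc_of% hnat]
  rw [← cancel_epi ((T.F.map ((MC.assocIso e₂ e₁).hom.app c)).app d)]
  rw [reassoc_of% h21]
  rw [← NatTrans.comp_app_assoc, ← Functor.map_comp, Iso.hom_inv_id_app, CategoryTheory.Functor.map_id,
    NatTrans.id_app, Category.id_comp, Iso.hom_inv_id_app_assoc]

end Aux2
section Aux3

open CategoryTheory MonoidalCategory Category LeftModuleCatStruct

variable {E : Type u} [Category.{v} E] [MonoidalCategory E] [SymmetricCategory E]
variable {C : Type*} [Category C]
variable {MC : LeftModuleCatStruct E C} {BC : MC.ModuleBraiding}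

lemma tau2_smul (e₁ e₂ : E) (c : C) :
    (BC.τ₂ (MC.smul e₁ c) e₂).hom =
      (MC.ex e₂ e₁ c).hom ≫ (MC.act.obj e₁).map (BC.τ₂ c e₂).hom ≫ (MC.ex e₁ e₂ c).hom := by
  have ha := BC.act_braiding₂ e₂ e₁ c
  exact (Iso.inv_comp_eq _).1 ha

lemma hY' (e₁ e₂ : E) (c : C) :
    (BC.τ₂ (MC.smul e₁ c) e₂).hom ≫ (MC.act.obj e₂).map (BC.τ₂ c e₁).hom =
      (MC.ex e₁ e₂ c).inv ≫ (MC.act.obj e₁).map (BC.τ₂ c e₂).hom ≫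
        (BC.τ₂ (MC.smul e₂ c) e₁).hom ≫ (MC.ex e₁ e₂ c).hom := by
  have hb := tau2_smul (BC := BC) e₂ e₁ c
  rw [tau2_smul (BC := BC) e₁ e₂ c]
  erw [Category.assoc (MC.ex e₂ e₁ c).hom, Category.assoc ((MC.act.obj e₁).map (BC.τ₂ c e₂).hom)]
  have hb' : (MC.ex e₁ e₂ c).hom ≫ (MC.act.obj e₂).map (BC.τ₂ c e₁).hom =
      (BC.τ₂ (MC.smul e₂ c) e₁).hom ≫ (MC.ex e₂ e₁ c).inv := by
    exact (Iso.eq_comp_inv _).2 (by rw [hb]; exact Category.assoc _ _ _)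
  erw [hb', ex_inv_eq MC e₂ e₁, ← ex_inv_eq MC e₁ e₂]
  exact rfl

lemma hX' (e₁ e₂ : E) (c : C) :
    (BC.τ₂ c (e₁ ⊗ e₂)).hom =
      (MC.rAssoc e₁ e₂ c).hom ≫ (MC.ex e₁ e₂ c).inv ≫
        (MC.act.obj e₁).map (BC.τ₂ c e₂).hom ≫ (BC.τ₂ (MC.smul e₂ c) e₁).hom ≫
        (MC.μ e₁ e₂ c).inv := by
  have ht := BC.tensor_braiding₂ e₁ e₂ c
  have hb : (MC.act.obj e₂).map (BC.τ₂ c e₁).hom ≫ (MC.ex e₁ e₂ c).inv =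
      (MC.ex e₁ e₂ c).inv ≫ (BC.τ₂ (MC.smul e₂ c) e₁).hom := by
    have hb0 := tau2_smul (BC := BC) e₂ e₁ c
    rw [← ex_inv_eq MC e₁ e₂] at hb0
    rw [hb0]
    simp
    exact rfl
  have hcomm := BC.τ₂_nat_right e₁ (BC.τ₂ c e₂).hom
  erw [rassoc hb, Category.assoc (MC.ex e₁ e₂ c).inv, ← hcomm] at ht
  replace ht := (Iso.inv_comp_eq _).1 ht
  refine ((Iso.eq_comp_inv _).2 ht).trans ?_
  erw [Category.assoc (MC.rAssoc e₁ e₂ c).hom, Category.assoc (MC.ex e₁ e₂ c).inv,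
    Category.assoc ((MC.act.obj e₁).map (BC.τ₂ c e₂).hom)]
  exact rfl

end Aux3
section Aux4

open CategoryTheory MonoidalCategory Category LeftModuleCatStruct

variable {E : Type u} [Category.{v} E] [MonoidalCategory E] [SymmetricCategory E]
variable {C : Type*} [Category C] {D : Type*} [Category D] {W : Type*} [Category W]
variable {MC : LeftModuleCatStruct E C} {MD : LeftModuleCatStruct E D}
  {MW : LeftModuleCatStruct E W}

lemma hR2' (T : EBilinearBifunctor MC MD MW) (e₁ e₂ : E) (c : C) (d : D) :
    (T.F.map (MC.μ e₁ e₂ c).inv).app d ≫ (T.s₁ (e₁ ⊗ e₂) c d).hom =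
      (T.s₁ e₁ (MC.smul e₂ c) d).hom ≫ (MW.act.obj e₁).map (T.s₁ e₂ c d).hom ≫
        (MW.μ e₁ e₂ ((T.F.obj c).obj d)).inv := by
  rw [← cancel_epi ((T.F.map (MC.μ e₁ e₂ c).hom).app d), ← NatTrans.comp_app_assoc,
    ← Functor.map_comp, Iso.hom_inv_id, CategoryTheory.Functor.map_id, NatTrans.id_app,
    Category.id_comp]
  erw [← Category.assoc (T.s₁ e₁ (MC.smul e₂ c) d).hom, rassoc (T.s₁_tensor e₁ e₂ c d),
    Category.assoc, Iso.hom_inv_id, Category.comp_id]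

lemma hR3' (T : EBilinearBifunctor MC MD MW) (e₁ e₂ : E) (c : C) (d : D) :
    (T.s₂ (e₁ ⊗ e₂) c d).inv ≫ (T.F.obj c).map (MD.μ e₁ e₂ d).hom =
      (MW.μ e₁ e₂ ((T.F.obj c).obj d)).hom ≫ (MW.act.obj e₁).map (T.s₂ e₂ c d).inv ≫
        (T.s₂ e₁ c (MD.smul e₂ d)).inv := by
  rw [Iso.inv_comp_eq]
  erw [← Category.assoc (T.s₂ (e₁ ⊗ e₂) c d).hom, ← T.s₂_tensor e₁ e₂ c d,
    Category.assoc ((T.F.obj c).map (MD.μ e₁ e₂ d).hom), Category.assoc (T.s₂ e₁ c (MD.smul e₂ d)).hom,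
    ← Category.assoc ((MW.act.obj e₁).map (T.s₂ e₂ c d).hom), ← Functor.map_comp, Iso.hom_inv_id,
    CategoryTheory.Functor.map_id, Category.id_comp, Iso.hom_inv_id, Category.comp_id]

end Aux4
section AbsLemmas

lemma kp_abs {C D W : Type*} [Category C] [Category D] [Category W] (F : C ⥤ D ⥤ W)
    {c c1 A B R : C} {d d2 dR d12 : D} {Y1 Y2 Yt Z1 Z2 : W}
    {rA : R ≅ A} {τA mB : A ⟶ A} {ex : B ≅ A} {m τ' : B ≅ B}
    {μ : R ≅ B} {τR : R ⟶ R} {τc1 : c1 ⟶ c1}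
    {s1a : (F.obj A).obj d ≅ Y1} {s2a : (F.obj c1).obj d2 ≅ Y1} {s1b : (F.obj c1).obj d2 ≅ Y2}
    {s2b : (F.obj c).obj d12 ≅ Y2} {s1t : (F.obj R).obj d ≅ Yt} {s2t : (F.obj c).obj dR ≅ Yt}
    {μD : dR ⟶ d12} {G : Y1 ⟶ Y1} {s1B : (F.obj B).obj d ≅ Z1} {M1 : Z1 ⟶ Z2} {μW : Yt ≅ Z2}
    {M2 : Z2 ⟶ Y2}
    (h0 : (F.map rA.hom).app d ≫ (F.map τA).app d ≫ s1a.hom ≫ s2a.inv ≫ (F.map τc1).app d2 ≫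
        s1b.hom ≫ s2b.inv = (F.map τR).app d ≫ s1t.hom ≫ s2t.inv ≫ (F.obj c).map μD)
    (hn : (F.map τc1).app d2 ≫ s2a.hom = s2a.hom ≫ G)
    (hn1 : (F.map mB).app d ≫ s1a.hom = s1a.hom ≫ G)
    (hY : τA ≫ mB = ex.inv ≫ m.hom ≫ τ'.hom ≫ ex.hom)
    (hX : τR = rA.hom ≫ ex.inv ≫ m.hom ≫ τ'.hom ≫ μ.inv)
    (hR2 : (F.map μ.inv).app d ≫ s1t.hom = s1B.hom ≫ M1 ≫ μW.inv)
    (hR3 : s2t.inv ≫ (F.obj c).map μD = μW.hom ≫ M2 ≫ s2b.inv) :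
    (F.map ex.hom).app d ≫ s1a.hom ≫ s2a.inv ≫ s1b.hom = s1B.hom ≫ M1 ≫ M2 := by
  have hL1 : s2a.inv ≫ (F.map τc1).app d2 = G ≫ s2a.inv := by
    rw [Iso.inv_comp_eq, ← reassoc_of% hn]
    simp
  rw [reassoc_of% hL1] at h0
  rw [← reassoc_of% hn1] at h0
  have hYm := congrArg (fun f => (F.map f).app d) hY
  simp only [Functor.map_comp, NatTrans.comp_app, Category.assoc] at hYm
  rw [reassoc_of% hYm] at h0
  rw [hX] at h0
  simp only [Functor.map_comp, NatTrans.comp_app, Category.assoc] at h0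
  rw [reassoc_of% hR2, hR3] at h0
  simp only [Iso.inv_hom_id_assoc] at h0
  rw [cancel_epi ((F.map rA.hom).app d), cancel_epi ((F.map ex.inv).app d),
    cancel_epi ((F.map m.hom).app d), cancel_epi ((F.map τ'.hom).app d)] at h0
  rw [← cancel_mono (s2b.inv)]
  simp only [Category.assoc]
  exact h0

lemma main_abs {C D W : Type*} [Category C] [Category D] [Category W] (F : C ⥤ D ⥤ W)
    (H : W ⥤ W) {A B c1 : C} {d d2 : D} {Y1 Z1 V P Q : W}
    {ex : A ≅ B} {s1a : (F.obj A).obj d ≅ Y1} {s2a : (F.obj c1).obj d2 ≅ Y1}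
    {s1b : (F.obj c1).obj d2 ≅ H.obj P} {s1B : (F.obj B).obj d ≅ Z1} {M1 : Z1 ⟶ H.obj Q}
    {s : P ≅ Q} {N : Y1 ⟶ V} {exW : V ≅ H.obj Q}
    (hk : (F.map ex.inv).app d ≫ s1a.hom ≫ s2a.inv ≫ s1b.hom = s1B.hom ≫ M1 ≫ H.map s.inv)
    (hex : (F.map ex.hom).app d ≫ s1B.hom ≫ M1 = s1a.hom ≫ N ≫ exW.hom) :
    s2a.hom ≫ N ≫ exW.hom = s1b.hom ≫ H.map s.hom := by
  have h1 : s1a.hom ≫ s2a.inv ≫ s1b.hom = s1a.hom ≫ N ≫ exW.hom ≫ H.map s.inv := by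
    rw [← cancel_epi ((F.map ex.inv).app d), hk, ← reassoc_of% hex, ← NatTrans.comp_app_assoc,
      ← Functor.map_comp, Iso.inv_hom_id, CategoryTheory.Functor.map_id, NatTrans.id_app,
      Category.id_comp]
  rw [cancel_epi s1a.hom, Iso.inv_comp_eq] at h1
  rw [h1]
  simp [← Functor.map_comp]

end AbsLemmas
section Aux5

open CategoryTheory MonoidalCategory Category LeftModuleCatStruct

variable {E : Type u} [Category.{v} E] [MonoidalCategory E] [SymmetricCategory E]
variable {C : Type*} [Category C] {D : Type*} [Category D] {W : Type*} [Category W]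
variable {MC : LeftModuleCatStruct E C} {BC : MC.ModuleBraiding}
  {MD : LeftModuleCatStruct E D} {BD : MD.ModuleBraiding}
  {MW : LeftModuleCatStruct E W} {BW : MW.ModuleBraiding}

lemma key_pentagon (T : BraidingPreservedBifunctor MC BC MD BD MW BW)
    (e₁ e₂ : E) (c : C) (d : D) :
    (T.F.map (MC.ex e₁ e₂ c).hom).app d ≫ (T.s₁ e₂ (MC.smul e₁ c) d).hom ≫
        (T.s₂ e₂ (MC.smul e₁ c) d).inv ≫ (T.s₁ e₁ c (MD.smul e₂ d)).hom =
      (T.s₁ e₁ (MC.smul e₂ c) d).hom ≫ (MW.act.obj e₁).map (T.s₁ e₂ c d).hom ≫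
        (MW.act.obj e₁).map (T.s₂ e₂ c d).inv := by
  have h0 := T.balanced_tensor e₁ e₂ c d
  simp only [EBilinearBifunctor.bal, Category.assoc] at h0
  exact kp_abs T.F (m := (MC.act.obj e₁).mapIso (BC.τ₂ c e₂))
    (τ' := BC.τ₂ (MC.smul e₂ c) e₁) h0 (T.s₂_nat_c e₂ (BC.τ₂ c e₁).hom d) (T.s₁_nat_c e₂ (BC.τ₂ c e₁).hom d)
    (hY' (BC := BC) e₁ e₂ c) (hX' (BC := BC) e₁ e₂ c) (hR2' T.toEBilinearBifunctor e₁ e₂ c d)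
    (hR3' T.toEBilinearBifunctor e₁ e₂ c d)

end Aux5


/-- Proposition 2.9, diagram (2.8) of the paper.
Let `F : C × D → W` be a braiding-preserved `E`-bilinear bifunctor between braided
`E`-modules.  Then for all `e₁, e₂ : E`, `c : C`, `d : D` the pentagon
`(r_{e₂,e₁} ⊙ 1_{F(c,d)}) ∘ (1_{e₂} ⊙ s^{F1}_{e₁,c}) ∘ s^{F2}_{e₂,d}
  = (1_{e₁} ⊙ s^{F2}_{e₂,d}) ∘ s^{F1}_{e₁,c}`
commutes, as morphisms `F(e₁ ⊙ c, e₂ ⊙ d) ⟶ e₁ ⊙ e₂ ⊙ F(c, d)`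
(the action of the braiding `r_{e₂,e₁}` on `e₂ ⊙ (e₁ ⊙ F(c,d))` being encoded by
the canonical exchange isomorphism `MW.ex`). -/
theorem statement4
    {k : Type*} [Field k] [IsAlgClosed k] [CharZero k]
    {E : Type u} [Category.{v} E] [MonoidalCategory E] [SymmetricCategory E]
    [Preadditive E] [CategoryTheory.Linear k E]
    {C : Type*} [Category C] {D : Type*} [Category D] {W : Type*} [Category W]
    [Preadditive C] [CategoryTheory.Linear k C]
    [Preadditive D] [CategoryTheory.Linear k D]
    [Preadditive W] [CategoryTheory.Linear k W]
    {MC : LeftModuleCatStruct E C} {BC : MC.ModuleBraiding}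
    {MD : LeftModuleCatStruct E D} {BD : MD.ModuleBraiding}
    {MW : LeftModuleCatStruct E W} {BW : MW.ModuleBraiding}
    (T : BraidingPreservedBifunctor MC BC MD BD MW BW) :
    ∀ (e₁ e₂ : E) (c : C) (d : D),
      (T.s₂ e₂ (MC.smul e₁ c) d).hom ≫ (MW.act.obj e₂).map (T.s₁ e₁ c d).hom ≫
          (MW.ex e₂ e₁ ((T.F.obj c).obj d)).hom =
        (T.s₁ e₁ c (MD.smul e₂ d)).hom ≫ (MW.act.obj e₁).map (T.s₂ e₂ c d).hom := by
  intro e₁ e₂ c d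
  have hk := key_pentagon T e₁ e₂ c d
  have hex := s₁_ex T.toEBilinearBifunctor e₁ e₂ c d
  rw [← ex_inv_eq MC e₂ e₁] at hk
  exact main_abs T.F (MW.act.obj e₁) hk hex
end

section
/- Let F: C × D → W be a braiding-preserved E-bilinear bifunctor between braided E-modules, with balanced structure b and with b̂_{c,e,d} := (s^{F2}_{e,d})^{-1} ∘ s^{F1}_{e,c}: F(e⊙c, d) → F(c, e⊙d). Then for all objects e₁, e₂ of E, c of C and d of D, the following square commutes: F(1_c, r_{e₁,e₂} ⊙ 1_d) ∘ b̂_{c, e₁, e₂⊙d} ∘ b_{e₁⊙c, e₂, d} = b_{c, e₂, e₁⊙d} ∘ b̂_{c⊙e₂, e₁, d} (as morphisms F((e₁⊙c)⊙e₂, d) = F(e₁⊙(c⊙e₂), d) → F(c, e₂⊙e₁⊙d)). -/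
/-!
Statement 0.

Let `E` be a symmetric fusion category (over an algebraically closed field `k` of
characteristic zero) with braiding `r = β_`, and let `(C, τ)` be a braided `E`-module,
i.e. a (finite semisimple) left `E`-module category equipped with an `E`-module braiding
`τ = τ² ∘ τ¹` (where the right `E`-action on `C` is induced from the left action,
`x ⊙ e := e ⊙ x`, and all structural identifications are made explicit via the
action associator `μ`, the induced right-associator `rAssoc` and the middle-exchange
isomorphism `ex`).

Then for all `e e' : E` and `x : C`:
* `τ¹_{e, x ⊙ e'} = (1_x ⊙ r_{e,e'}) ∘ (τ¹_{e,x} ⊙ 1_{e'})` as morphisms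
  `e ⊙ x ⊙ e' ⟶ x ⊙ e' ⊙ e`, and
* `τ²_{x ⊙ e', e} = (τ²_{x,e} ⊙ 1_{e'}) ∘ (1_x ⊙ r_{e',e})` as morphisms
  `x ⊙ e' ⊙ e ⟶ e ⊙ x ⊙ e'`.
-/

open CategoryTheory MonoidalCategory Category

universe v u v' u'

section AuxLemmas

variable {E : Type u} [Category.{v} E] [MonoidalCategory E] [SymmetricCategory E]
variable {C : Type*} [Category C] {D : Type*} [Category D] {W : Type*} [Category W]
variable {MC : LeftModuleCatStruct E C} {MD : LeftModuleCatStruct E D}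
  {MW : LeftModuleCatStruct E W}

namespace EBilinearBifunctor

lemma bal_eq' (T : EBilinearBifunctor MC MD MW) (BC : MC.ModuleBraiding)
    (c : C) (e : E) (d : D) :
    T.bal BC c e d = (T.F.map (BC.τ₂ c e).hom).app d ≫ T.bhat c e d := by
  simp [bal, bhat]

lemma bhat_eq' (T : EBilinearBifunctor MC MD MW) (BC : MC.ModuleBraiding)
    (c : C) (e : E) (d : D) :
    T.bhat c e d = (T.F.map (BC.τ₂ c e).inv).app d ≫ T.bal BC c e d := by
  rw [bal_eq', ← Category.assoc, ← NatTrans.comp_app, ← CategoryTheory.Functor.map_comp,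
    Iso.inv_hom_id, CategoryTheory.Functor.map_id, NatTrans.id_app, Category.id_comp]

lemma bhat_natE (T : EBilinearBifunctor MC MD MW) {e e' : E} (f : e ⟶ e') (c : C) (d : D) :
    (T.F.map ((MC.act.map f).app c)).app d ≫ T.bhat c e' d =
      T.bhat c e d ≫ (T.F.obj c).map ((MD.act.map f).app d) := by
  unfold bhat
  have h2 : (MW.act.map f).app ((T.F.obj c).obj d) ≫ (T.s₂ e' c d).inv =
      (T.s₂ e c d).inv ≫ (T.F.obj c).map ((MD.act.map f).app d) := by
    erw [Iso.comp_inv_eq, Category.assoc, Iso.eq_inv_comp]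
    exact (T.s₂_nat_e f c d).symm
  erw [← Category.assoc, T.s₁_nat_e f c d, Category.assoc, h2, Category.assoc]
  rfl

lemma bhat_natC (T : EBilinearBifunctor MC MD MW)
    (e : E) {x y : C} (f : x ⟶ y) (d : D) :
    (T.F.map ((MC.act.obj e).map f)).app d ≫ T.bhat y e d =
      T.bhat x e d ≫ (T.F.map f).app (MD.smul e d) := by
  unfold bhat
  have h3 : (MW.act.obj e).map ((T.F.map f).app d) ≫ (T.s₂ e y d).inv =
      (T.s₂ e x d).inv ≫ (T.F.map f).app (MD.smul e d) := by
    erw [Iso.comp_inv_eq, Category.assoc, Iso.eq_inv_comp]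
    exact (T.s₂_nat_c e f d).symm
  erw [← Category.assoc, T.s₁_nat_c e f d, Category.assoc, h3, Category.assoc]
  rfl

lemma bal_natC (T : EBilinearBifunctor MC MD MW) (BC : MC.ModuleBraiding)
    (e : E) {x y : C} (f : x ⟶ y) (d : D) :
    (T.F.map ((MC.act.obj e).map f)).app d ≫ T.bal BC y e d =
      T.bal BC x e d ≫ (T.F.map f).app (MD.smul e d) := by
  rw [bal_eq' T BC y e d, bal_eq' T BC x e d]
  have h1 : (T.F.map ((MC.act.obj e).map f)).app d ≫ (T.F.map (BC.τ₂ y e).hom).app d =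
      (T.F.map (BC.τ₂ x e).hom).app d ≫ (T.F.map ((MC.act.obj e).map f)).app d := by
    erw [← NatTrans.comp_app, ← CategoryTheory.Functor.map_comp, BC.τ₂_nat_right,
      CategoryTheory.Functor.map_comp, NatTrans.comp_app]
    rfl
  erw [← Category.assoc, h1, Category.assoc, bhat_natC T e f d, Category.assoc]
  simp [bhat]
  rfl

lemma bal_natE (T : EBilinearBifunctor MC MD MW) (BC : MC.ModuleBraiding)
    {e e' : E} (f : e ⟶ e') (c : C) (d : D) :
    (T.F.map ((MC.act.map f).app c)).app d ≫ T.bal BC c e' d =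
      T.bal BC c e d ≫ (T.F.obj c).map ((MD.act.map f).app d) := by
  rw [bal_eq' T BC c e' d, bal_eq' T BC c e d]
  have h1 : (T.F.map ((MC.act.map f).app c)).app d ≫ (T.F.map (BC.τ₂ c e').hom).app d =
      (T.F.map (BC.τ₂ c e).hom).app d ≫ (T.F.map ((MC.act.map f).app c)).app d := by
    erw [← NatTrans.comp_app, ← CategoryTheory.Functor.map_comp, BC.τ₂_nat_left,
      CategoryTheory.Functor.map_comp, NatTrans.comp_app]
    rfl
  erw [← Category.assoc, h1, Category.assoc, bhat_natE T f c d, Category.assoc]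
  simp [bhat]
  rfl

end EBilinearBifunctor

namespace LeftModuleCatStruct

lemma rAssoc_hom' (M : LeftModuleCatStruct E C) (e e' : E) (x : C) :
    (M.rAssoc e e' x).hom = (M.act.map (β_ e e').hom).app x ≫ (M.μ e' e x).hom := rfl

lemma ex_hom' (M : LeftModuleCatStruct E C) (e e' : E) (x : C) :
    (M.ex e e' x).hom =
      (M.μ e e' x).inv ≫ (M.act.map (β_ e e').hom).app x ≫ (M.μ e' e x).hom := rfl

/-- `rAssoc(e',e) ≫ ex(e,e') = μ(e',e)` using the symmetry of `E`. -/
lemma rAssoc_comp_ex (M : LeftModuleCatStruct E C) (e e' : E) (x : C) :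
    (M.rAssoc e' e x).hom ≫ (M.ex e e' x).hom = (M.μ e' e x).hom := by
  erw [rAssoc_hom', ex_hom', Category.assoc, Iso.hom_inv_id_assoc,
    ← Category.assoc, ← NatTrans.comp_app, ← CategoryTheory.Functor.map_comp,
    SymmetricCategory.symmetry, CategoryTheory.Functor.map_id, NatTrans.id_app]
  exact Category.id_comp _

/-- The key `C`-side identity used in Statement 5, derived from `act_braiding₂`
and the symmetry of `E`. -/
lemma cSide (M : LeftModuleCatStruct E C) (B : M.ModuleBraiding) (e₁ e₂ : E) (x : C) :
    (M.act.obj e₂).map (B.τ₂ x e₁).inv ≫ (M.rAssoc e₁ e₂ x).inv =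
      (M.ex e₂ e₁ x).hom ≫ (B.τ₂ (M.smul e₂ x) e₁).inv ≫ (M.rAssoc e₂ e₁ x).inv ≫
        (M.act.map (β_ e₁ e₂).inv).app x := by
  have hA : (M.ex e₂ e₁ x).hom ≫ (B.τ₂ (M.smul e₂ x) e₁).inv =
      (M.act.obj e₂).map (B.τ₂ x e₁).inv ≫ (M.ex e₁ e₂ x).inv := by
    have h := B.act_braiding₂ e₁ e₂ x
    erw [Iso.comp_inv_eq, Category.assoc, h, ← Category.assoc,
      ← CategoryTheory.Functor.map_comp, Iso.inv_hom_id,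
      CategoryTheory.Functor.map_id]
    exact (Category.id_comp _).symm
  rw [← Category.assoc (M.ex e₂ e₁ x).hom, hA]
  refine Eq.trans ?_ (Category.assoc _ _ _).symm
  congr 1
  erw [Iso.eq_inv_comp, Iso.eq_inv_comp, ← Category.assoc, rAssoc_comp_ex,
    Iso.comp_inv_eq, rAssoc_hom', ← Category.assoc, ← NatTrans.comp_app,
    ← CategoryTheory.Functor.map_comp, Iso.inv_hom_id,
    CategoryTheory.Functor.map_id, NatTrans.id_app]
  exact (Category.id_comp _).symm

/-- The `D`-side identity: `μ(e₁,e₂) ≫ ex(e₁,e₂) = (β ⊙ 1) ≫ μ(e₂,e₁)`. -/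
lemma dSide (M : LeftModuleCatStruct E C) (e₁ e₂ : E) (x : C) :
    (M.μ e₁ e₂ x).hom ≫ (M.ex e₁ e₂ x).hom =
      (M.act.map (β_ e₁ e₂).hom).app x ≫ (M.μ e₂ e₁ x).hom := by
  rw [ex_hom', Iso.hom_inv_id_assoc]
  rfl

end LeftModuleCatStruct

end AuxLemmas

/-- Proposition 2.10, diagram (2.9) of the paper.
Let `F : C × D → W` be a braiding-preserved `E`-bilinear bifunctor between braided
`E`-modules, with balanced structure `b` and with
`b̂_{c,e,d} := (s^{F2}_{e,d})⁻¹ ∘ s^{F1}_{e,c} : F(e ⊙ c, d) → F(c, e ⊙ d)`.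
Then for all `e₁, e₂ : E`, `c : C`, `d : D`:
`F(1_c, r_{e₁,e₂} ⊙ 1_d) ∘ b̂_{c,e₁,e₂ ⊙ d} ∘ b_{e₁ ⊙ c, e₂, d}
  = b_{c, e₂, e₁ ⊙ d} ∘ b̂_{c ⊙ e₂, e₁, d}`
as morphisms `F((e₁ ⊙ c) ⊙ e₂, d) = F(e₁ ⊙ (c ⊙ e₂), d) ⟶ F(c, e₂ ⊙ e₁ ⊙ d)`
(the identifications being the canonical exchange isomorphisms `MC.ex` and `MD.ex`). -/
theorem statement5
    {k : Type*} [Field k] [IsAlgClosed k] [CharZero k]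
    {E : Type u} [Category.{v} E] [MonoidalCategory E] [SymmetricCategory E]
    [Preadditive E] [CategoryTheory.Linear k E]
    {C : Type*} [Category C] {D : Type*} [Category D] {W : Type*} [Category W]
    [Preadditive C] [CategoryTheory.Linear k C]
    [Preadditive D] [CategoryTheory.Linear k D]
    [Preadditive W] [CategoryTheory.Linear k W]
    {MC : LeftModuleCatStruct E C} {BC : MC.ModuleBraiding}
    {MD : LeftModuleCatStruct E D} {BD : MD.ModuleBraiding}
    {MW : LeftModuleCatStruct E W} {BW : MW.ModuleBraiding}
    (T : BraidingPreservedBifunctor MC BC MD BD MW BW) :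
    ∀ (e₁ e₂ : E) (c : C) (d : D),
      T.toEBilinearBifunctor.bal BC (MC.smul e₁ c) e₂ d ≫
          T.toEBilinearBifunctor.bhat c e₁ (MD.smul e₂ d) ≫
          (T.F.obj c).map (MD.ex e₁ e₂ d).hom =
        (T.F.map (MC.ex e₂ e₁ c).hom).app d ≫
          T.toEBilinearBifunctor.bhat (MC.smul e₂ c) e₁ d ≫
          T.toEBilinearBifunctor.bal BC c e₂ (MD.smul e₁ d) := by
  intro e₁ e₂ c d
  -- Abbreviation for the underlying bilinear bifunctor
  set S := T.toEBilinearBifunctor with hS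
  -- The two instances of `balanced_tensor`, rearranged
  have hBT1 : S.bal BC (MC.smul e₁ c) e₂ d ≫ S.bal BC c e₁ (MD.smul e₂ d) =
      (T.F.map (MC.rAssoc e₁ e₂ c).inv).app d ≫
        S.bal BC c (e₁ ⊗ e₂) d ≫ (T.F.obj c).map (MD.μ e₁ e₂ d).hom := by
    rw [← T.balanced_tensor e₁ e₂ c d, ← Category.assoc, ← NatTrans.comp_app,
      ← CategoryTheory.Functor.map_comp, Iso.inv_hom_id, CategoryTheory.Functor.map_id, NatTrans.id_app,
      Category.id_comp]
  have hBT2 : S.bal BC (MC.smul e₂ c) e₁ d ≫ S.bal BC c e₂ (MD.smul e₁ d) =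
      (T.F.map (MC.rAssoc e₂ e₁ c).inv).app d ≫
        S.bal BC c (e₂ ⊗ e₁) d ≫ (T.F.obj c).map (MD.μ e₂ e₁ d).hom := by
    rw [← T.balanced_tensor e₂ e₁ c d, ← Category.assoc, ← NatTrans.comp_app,
      ← CategoryTheory.Functor.map_comp, Iso.inv_hom_id, CategoryTheory.Functor.map_id, NatTrans.id_app,
      Category.id_comp]
  -- Naturality of `bal` in the `E`-variable applied to the braiding of `E`
  have hSwap : S.bal BC c (e₂ ⊗ e₁) d =
      (T.F.map ((MC.act.map (β_ e₁ e₂).inv).app c)).app d ≫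
        S.bal BC c (e₁ ⊗ e₂) d ≫
        (T.F.obj c).map ((MD.act.map (β_ e₁ e₂).hom).app d) := by
    erw [← S.bal_natE BC (β_ e₁ e₂).hom c d, ← Category.assoc, ← NatTrans.comp_app,
      ← CategoryTheory.Functor.map_comp, ← NatTrans.comp_app, ← CategoryTheory.Functor.map_comp, Iso.inv_hom_id,
      CategoryTheory.Functor.map_id, NatTrans.id_app, CategoryTheory.Functor.map_id, NatTrans.id_app,
      Category.id_comp]
  -- Naturality of `bal` in the `C`-variable applied to `τ₂⁻¹`
  have hL2 : S.bal BC (MC.smul e₁ c) e₂ d ≫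
        (T.F.map (BC.τ₂ c e₁).inv).app (MD.smul e₂ d) =
      (T.F.map ((MC.act.obj e₂).map (BC.τ₂ c e₁).inv)).app d ≫
        S.bal BC (MC.smul e₁ c) e₂ d :=
    (S.bal_natC BC e₂ (BC.τ₂ c e₁).inv d).symm
  refine Eq.trans (b := S.bal BC (MC.smul e₁ c) e₂ d ≫
          ((T.F.map (BC.τ₂ c e₁).inv).app (MD.smul e₂ d) ≫
            S.bal BC c e₁ (MD.smul e₂ d)) ≫
          (T.F.obj c).map (MD.ex e₁ e₂ d).hom) ?_ ?_
  · rw [S.bhat_eq' BC c e₁ (MD.smul e₂ d)]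
  refine Eq.trans (b := (S.bal BC (MC.smul e₁ c) e₂ d ≫
          (T.F.map (BC.τ₂ c e₁).inv).app (MD.smul e₂ d)) ≫
          S.bal BC c e₁ (MD.smul e₂ d) ≫
          (T.F.obj c).map (MD.ex e₁ e₂ d).hom) ?_ ?_
  · repeat erw [Category.assoc]
  refine Eq.trans (b := ((T.F.map ((MC.act.obj e₂).map (BC.τ₂ c e₁).inv)).app d ≫
          S.bal BC (MC.smul e₁ c) e₂ d) ≫
          S.bal BC c e₁ (MD.smul e₂ d) ≫
          (T.F.obj c).map (MD.ex e₁ e₂ d).hom) ?_ ?_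
  · erw [hL2]
    rfl
  refine Eq.trans (b := (T.F.map ((MC.act.obj e₂).map (BC.τ₂ c e₁).inv)).app d ≫
          (S.bal BC (MC.smul e₁ c) e₂ d ≫ S.bal BC c e₁ (MD.smul e₂ d)) ≫
          (T.F.obj c).map (MD.ex e₁ e₂ d).hom) ?_ ?_
  · repeat erw [Category.assoc]
  refine Eq.trans (b := (T.F.map ((MC.act.obj e₂).map (BC.τ₂ c e₁).inv)).app d ≫
          ((T.F.map (MC.rAssoc e₁ e₂ c).inv).app d ≫
            S.bal BC c (e₁ ⊗ e₂) d ≫ (T.F.obj c).map (MD.μ e₁ e₂ d).hom) ≫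
          (T.F.obj c).map (MD.ex e₁ e₂ d).hom) ?_ ?_
  · erw [hBT1]
    rfl
  refine Eq.trans (b := (T.F.map ((MC.act.obj e₂).map (BC.τ₂ c e₁).inv ≫ (MC.rAssoc e₁ e₂ c).inv)).app d ≫
          S.bal BC c (e₁ ⊗ e₂) d ≫
          (T.F.obj c).map ((MD.μ e₁ e₂ d).hom ≫ (MD.ex e₁ e₂ d).hom)) ?_ ?_
  · erw [T.F.map_comp ((MC.act.obj e₂).map (BC.τ₂ c e₁).inv) (MC.rAssoc e₁ e₂ c).inv,
      NatTrans.comp_app, (T.F.obj c).map_comp (MD.μ e₁ e₂ d).hom (MD.ex e₁ e₂ d).hom]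
    simp only [Category.assoc]
    refine congrArg (_ ≫ ·) ?_
    exact (Category.assoc _ _ _).trans (congrArg (_ ≫ ·) (Category.assoc _ _ _))
  refine Eq.trans (b := (T.F.map ((MC.ex e₂ e₁ c).hom ≫ (BC.τ₂ (MC.smul e₂ c) e₁).inv ≫
            (MC.rAssoc e₂ e₁ c).inv ≫ (MC.act.map (β_ e₁ e₂).inv).app c)).app d ≫
          S.bal BC c (e₁ ⊗ e₂) d ≫
          (T.F.obj c).map ((MD.act.map (β_ e₁ e₂).hom).app d ≫ (MD.μ e₂ e₁ d).hom)) ?_ ?_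
  · rw [MC.cSide BC e₁ e₂ c, MD.dSide e₁ e₂ d]
    rfl
  refine Eq.trans (b := (T.F.map (MC.ex e₂ e₁ c).hom).app d ≫
          (T.F.map (BC.τ₂ (MC.smul e₂ c) e₁).inv).app d ≫
          ((T.F.map (MC.rAssoc e₂ e₁ c).inv).app d ≫
            ((T.F.map ((MC.act.map (β_ e₁ e₂).inv).app c)).app d ≫
              S.bal BC c (e₁ ⊗ e₂) d ≫
              (T.F.obj c).map ((MD.act.map (β_ e₁ e₂).hom).app d)) ≫
            (T.F.obj c).map (MD.μ e₂ e₁ d).hom)) ?_ ?_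
  · erw [T.F.map_comp (MC.ex e₂ e₁ c).hom, T.F.map_comp (BC.τ₂ (MC.smul e₂ c) e₁).inv,
      T.F.map_comp (MC.rAssoc e₂ e₁ c).inv, NatTrans.comp_app, NatTrans.comp_app, NatTrans.comp_app,
      (T.F.obj c).map_comp ((MD.act.map (β_ e₁ e₂).hom).app d) (MD.μ e₂ e₁ d).hom]
    simp only [Category.assoc]
    refine congrArg (_ ≫ ·) (congrArg (_ ≫ ·) (congrArg (_ ≫ ·) ?_))
    exact ((Category.assoc _ _ _).trans (congrArg (_ ≫ ·) (Category.assoc _ _ _))).symm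
  refine Eq.trans (b := (T.F.map (MC.ex e₂ e₁ c).hom).app d ≫
          (T.F.map (BC.τ₂ (MC.smul e₂ c) e₁).inv).app d ≫
          ((T.F.map (MC.rAssoc e₂ e₁ c).inv).app d ≫
            S.bal BC c (e₂ ⊗ e₁) d ≫ (T.F.obj c).map (MD.μ e₂ e₁ d).hom)) ?_ ?_
  · erw [← hSwap]
    rfl
  refine Eq.trans (b := (T.F.map (MC.ex e₂ e₁ c).hom).app d ≫
          (T.F.map (BC.τ₂ (MC.smul e₂ c) e₁).inv).app d ≫
          (S.bal BC (MC.smul e₂ c) e₁ d ≫ S.bal BC c e₂ (MD.smul e₁ d))) ?_ ?_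
  · rw [hBT2]
  refine Eq.trans (b := (T.F.map (MC.ex e₂ e₁ c).hom).app d ≫
          ((T.F.map (BC.τ₂ (MC.smul e₂ c) e₁).inv).app d ≫
            S.bal BC (MC.smul e₂ c) e₁ d) ≫ S.bal BC c e₂ (MD.smul e₁ d)) ?_ ?_
  · repeat erw [Category.assoc]
  · rw [← S.bhat_eq' BC (MC.smul e₂ c) e₁ d]
end
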